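/- With S = {(s₁,…,s_N) : 0 ≤ sᵢ ≤ 1} \ {(0,…,0)}, a_S(ℓ₁,…,ℓ_N) = Σ_{k=max(ℓ₁,…,ℓ_N)}^{ℓ₁+⋯+ℓ_N} Σ_{j=0}^{k} (−1)^j · C(k,j) · ∏_{i=1}^{N} C(k−j, ℓᵢ). -/

import Mathlib

open Finset

namespace Stmt16Aux

variable (N : ℕ) (ℓ : Fin N → ℕ)

/-- 0/1 function on `Fin k` summing to `m`, vanishing on `T`. -/
abbrev Row (k m : ℕ) (T : Finset (Fin k)) : Type :=
  {f : Fin k → ℕ // (∀ j, f j ≤ 1) ∧ (∑ j, f j = m) ∧ ∀ j ∈ T, f j = 0}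

def rowEquiv (k m : ℕ) (T : Finset (Fin k)) :
    Row k m T ≃ {s : Finset (Fin k) // s ∈ Finset.powersetCard m Tᶜ} where
  toFun f := ⟨univ.filter (fun j => f.1 j = 1), by
    obtain ⟨f, h1, h2, h3⟩ := f
    simp only [Finset.mem_powersetCard]
    constructor
    · intro j hj
      simp only [Finset.mem_filter] at hj
      simp only [Finset.mem_compl]
      intro hT
      have := h3 j hT
      omega
    · rw [Finset.card_filter]
      calc (∑ i : Fin k, if f i = 1 then 1 else 0) = ∑ j, f j := by
            refine Finset.sum_congr rfl fun j _ => ?_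
            have := h1 j
            interval_cases h : f j <;> simp
        _ = m := h2⟩
  invFun s := ⟨fun j => if j ∈ s.1 then 1 else 0, by
    have hs := Finset.mem_powersetCard.mp s.2
    refine ⟨fun j => ?_, ?_, fun j hj => ?_⟩
    · dsimp only; split <;> omega
    · dsimp only
      rw [Finset.sum_ite_mem, Finset.univ_inter]
      simpa using hs.2
    · dsimp only
      simp only [ite_eq_right_iff]
      intro hjs
      exact absurd (hs.1 hjs) (by simp [hj])⟩
  left_inv f := by
    obtain ⟨f, h1, h2, h3⟩ := f
    refine Subtype.ext (funext fun j => ?_)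
    simp only [Finset.mem_filter, Finset.mem_univ, true_and]
    have := h1 j
    interval_cases h : f j <;> simp
  right_inv s := by
    refine Subtype.ext ?_
    ext j
    simp

theorem card_row (k m : ℕ) (T : Finset (Fin k)) :
    Nat.card (Row k m T) = (k - T.card).choose m := by
  rw [Nat.card_congr (rowEquiv k m T), Nat.card_eq_fintype_card, Fintype.card_coe,
    Finset.card_powersetCard, Finset.card_compl, Fintype.card_fin]

/-- matrices with 0/1 entries, row sums `ℓ`, columns in `T` zero -/
abbrev Mrest (k : ℕ) (T : Finset (Fin k)) : Type :=
  {A : Fin k → Fin N → ℕ //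
    (∀ j i, A j i ≤ 1) ∧ (∀ i, ∑ j, A j i = ℓ i) ∧ ∀ j ∈ T, ∀ i, A j i = 0}

/-- matrices with 0/1 entries and row sums `ℓ` -/
abbrev Mk (k : ℕ) : Type :=
  {A : Fin k → Fin N → ℕ // (∀ j i, A j i ≤ 1) ∧ ∀ i, ∑ j, A j i = ℓ i}

/-- matrices with 0/1 entries, nonzero columns and row sums `ℓ` -/
abbrev Tk (k : ℕ) : Type :=
  {A : Fin k → Fin N → ℕ // (∀ j, (∀ i, A j i ≤ 1) ∧ A j ≠ 0) ∧ ∀ i, ∑ j, A j i = ℓ i}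

def mrestEquiv (k : ℕ) (T : Finset (Fin k)) :
    Mrest N ℓ k T ≃ ∀ i, Row k (ℓ i) T where
  toFun A i := ⟨fun j => A.1 j i, fun j => A.2.1 j i, A.2.2.1 i, fun j hj => A.2.2.2 j hj i⟩
  invFun B := ⟨fun j i => (B i).1 j, fun j i => (B i).2.1 j, fun i => (B i).2.2.1,
    fun j hj i => (B i).2.2.2 j hj⟩
  left_inv _ := rfl
  right_inv _ := rfl

theorem card_mrest (k : ℕ) (T : Finset (Fin k)) :
    Nat.card (Mrest N ℓ k T) = ∏ i, (k - T.card).choose (ℓ i) := by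
  rw [Nat.card_congr (mrestEquiv N ℓ k T), Nat.card_pi]
  exact Finset.prod_congr rfl fun i _ => card_row k (ℓ i) T

instance (k : ℕ) : Finite (Mk N ℓ k) := by
  apply Finite.of_injective
    (fun A => (fun j i => (⟨A.1 j i, by have := A.2.1 j i; omega⟩ : Fin 2) : Fin k → Fin N → Fin 2))
  intro A B h
  apply Subtype.ext; funext j i
  have := congrFun (congrFun h j) i
  simpa [Fin.ext_iff] using this

noncomputable instance (k : ℕ) : Fintype (Mk N ℓ k) := Fintype.ofFinite _

instance (k : ℕ) : Finite (Tk N ℓ k) := by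
  apply Finite.of_injective
    (fun A => (⟨A.1, fun j i => (A.2.1 j).1 i, A.2.2⟩ : Mk N ℓ k))
  intro A B h
  simp only [Subtype.mk.injEq] at h
  exact Subtype.ext h

noncomputable instance (k : ℕ) : Fintype (Tk N ℓ k) := Fintype.ofFinite _

theorem card_subtype_eq_sum (k : ℕ) (p : Mk N ℓ k → Prop) [DecidablePred p] :
    (Nat.card {A : Mk N ℓ k // p A} : ℤ) = ∑ A : Mk N ℓ k, if p A then (1 : ℤ) else 0 := by
  rw [Nat.card_eq_fintype_card, Fintype.card_subtype, Finset.card_filter]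
  push_cast
  rfl

/-- the set of zero columns of a matrix -/
def zeroCols {k : ℕ} (A : Mk N ℓ k) : Finset (Fin k) :=
  univ.filter (fun j => ∀ i, A.1 j i = 0)

def tkEquiv (k : ℕ) : Tk N ℓ k ≃ {A : Mk N ℓ k // zeroCols N ℓ A = ∅} where
  toFun A := ⟨⟨A.1, fun j i => (A.2.1 j).1 i, A.2.2⟩, by
    rw [Finset.eq_empty_iff_forall_notMem]
    intro j hj
    simp only [zeroCols, Finset.mem_filter, Finset.mem_univ, true_and] at hj
    exact (A.2.1 j).2 (funext fun i => hj i)⟩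
  invFun A := ⟨A.1.1, ⟨fun j => ⟨fun i => A.1.2.1 j i, fun h0 => by
    have := Finset.eq_empty_iff_forall_notMem.mp A.2 j
    simp only [zeroCols, Finset.mem_filter, Finset.mem_univ, true_and] at this
    exact this fun i => by rw [h0]; rfl⟩, A.1.2.2⟩⟩
  left_inv _ := rfl
  right_inv _ := rfl

/-- inclusion-exclusion: the per-`k` count of matrices with nonzero 0/1 columns. -/
theorem key (k : ℕ) :
    (Nat.card (Tk N ℓ k) : ℤ) =
      ∑ j ∈ Finset.range (k + 1),
        (-1 : ℤ) ^ j * k.choose j * ∏ i, ((k - j).choose (ℓ i) : ℤ) := by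
  classical
  have hM : ∀ T : Finset (Fin k), ((Nat.card (Mrest N ℓ k T) : ℤ)) =
      ∑ A : Mk N ℓ k, if (∀ j ∈ T, ∀ i, A.1 j i = 0) then (1 : ℤ) else 0 := by
    intro T
    rw [← card_subtype_eq_sum]
    congr 1
    exact Nat.card_congr
      ⟨fun A => ⟨⟨A.1, A.2.1, A.2.2.1⟩, A.2.2.2⟩,
       fun A => ⟨A.1.1, A.1.2.1, A.1.2.2, A.2⟩,
       fun A => rfl, fun A => rfl⟩
  calc (Nat.card (Tk N ℓ k) : ℤ)
      = ∑ A : Mk N ℓ k, if zeroCols N ℓ A = ∅ then (1 : ℤ) else 0 := by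
        rw [← card_subtype_eq_sum, Nat.card_congr (tkEquiv N ℓ k)]
    _ = ∑ A : Mk N ℓ k, ∑ T ∈ (zeroCols N ℓ A).powerset, (-1 : ℤ) ^ T.card := by
        refine Finset.sum_congr rfl fun A _ => ?_
        rw [Finset.sum_powerset_neg_one_pow_card]
    _ = ∑ A : Mk N ℓ k, ∑ T ∈ (univ : Finset (Fin k)).powerset,
          if T ⊆ zeroCols N ℓ A then (-1 : ℤ) ^ T.card else 0 := by
        refine Finset.sum_congr rfl fun A _ => ?_
        rw [← Finset.sum_filter]
        congr 1
        ext T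
        simp [Finset.mem_powerset]
    _ = ∑ T ∈ (univ : Finset (Fin k)).powerset, ∑ A : Mk N ℓ k,
          if T ⊆ zeroCols N ℓ A then (-1 : ℤ) ^ T.card else 0 := Finset.sum_comm
    _ = ∑ T ∈ (univ : Finset (Fin k)).powerset,
          (-1 : ℤ) ^ T.card * ∑ A : Mk N ℓ k, if (∀ j ∈ T, ∀ i, A.1 j i = 0) then (1:ℤ) else 0 := by
        refine Finset.sum_congr rfl fun T _ => ?_
        rw [Finset.mul_sum]
        refine Finset.sum_congr rfl fun A _ => ?_
        have : T ⊆ zeroCols N ℓ A ↔ (∀ j ∈ T, ∀ i, A.1 j i = 0) := by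
          simp [Finset.subset_iff, zeroCols]
        rw [mul_ite, mul_one, mul_zero, if_congr this rfl rfl]
    _ = ∑ T ∈ (univ : Finset (Fin k)).powerset,
          (-1 : ℤ) ^ T.card * ∏ i, ((k - T.card).choose (ℓ i) : ℤ) := by
        refine Finset.sum_congr rfl fun T _ => ?_
        rw [← hM, card_mrest]
        push_cast
        ring
    _ = ∑ j ∈ Finset.range (k + 1),
          (-1 : ℤ) ^ j * k.choose j * ∏ i, ((k - j).choose (ℓ i) : ℤ) := by
        refine (Finset.sum_powerset_apply_card
          (fun m => (-1 : ℤ) ^ m * ∏ i, ((k - m).choose (ℓ i) : ℤ))).trans ?_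
        rw [Finset.card_univ, Fintype.card_fin]
        refine Finset.sum_congr rfl fun j hj => ?_
        rw [nsmul_eq_mul]
        push_cast
        ring

theorem tk_le {k : ℕ} (A : Tk N ℓ k) : k ≤ ∑ i, ℓ i := by
  have h : ∀ j : Fin k, 1 ≤ ∑ i, A.1 j i := by
    intro j
    by_contra h
    push_neg at h
    refine (A.2.1 j).2 (funext fun i => ?_)
    have h0 : ∀ i, A.1 j i = 0 := by
      intro i
      have h2 : A.1 j i ≤ ∑ i, A.1 j i :=
        Finset.single_le_sum (f := fun i => A.1 j i) (fun i _ => Nat.zero_le _)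
          (Finset.mem_univ i)
      omega
    simpa using h0 i
  calc k = ∑ _j : Fin k, 1 := by simp
    _ ≤ ∑ j : Fin k, ∑ i, A.1 j i := Finset.sum_le_sum fun j _ => h j
    _ = ∑ i, ∑ j : Fin k, A.1 j i := Finset.sum_comm
    _ = ∑ i, ℓ i := Finset.sum_congr rfl fun i _ => A.2.2 i

theorem tk_isEmpty_of_lt {k : ℕ} (h : ¬ Finset.univ.sup ℓ ≤ k) : IsEmpty (Tk N ℓ k) := by
  constructor
  intro A
  rw [Finset.sup_le_iff] at h
  push_neg at h
  obtain ⟨i, _, hi⟩ := h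
  have h1 : ℓ i ≤ k := by
    calc ℓ i = ∑ j : Fin k, A.1 j i := (A.2.2 i).symm
      _ ≤ ∑ _j : Fin k, 1 := Finset.sum_le_sum fun j _ => (A.2.1 j).1 i
      _ = k := by simp
  omega

end Stmt16Aux

/-- Total number of `S`-alignments of lengths `ℓ`: `N × k` matrices over `ℕ`
(for any `k ≥ 0`) with all columns in `S` and `i`-th row summing to `ℓ i`. -/
noncomputable def alignCount (N : ℕ) (S : Set (Fin N → ℕ)) (ℓ : Fin N → ℕ) : ℕ :=
  Nat.card {A : Σ k : ℕ, Fin k → Fin N → ℕ //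
    (∀ j, A.2 j ∈ S) ∧ ∀ i, ∑ j, A.2 j i = ℓ i}

namespace Stmt16Aux

variable (N : ℕ) (ℓ : Fin N → ℕ)

def sigEquiv :
    {A : Σ k : ℕ, Fin k → Fin N → ℕ //
      (∀ j, A.2 j ∈ {v : Fin N → ℕ | (∀ i, v i ≤ 1) ∧ v ≠ 0}) ∧ ∀ i, ∑ j, A.2 j i = ℓ i} ≃
    Σ k : Fin (∑ i, ℓ i + 1), Tk N ℓ k where
  toFun A := ⟨⟨A.1.1, Nat.lt_succ_of_le (tk_le N ℓ ⟨A.1.2, A.2.1, A.2.2⟩)⟩,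
    ⟨A.1.2, A.2.1, A.2.2⟩⟩
  invFun B := ⟨⟨B.1.1, B.2.1⟩, B.2.2.1, B.2.2.2⟩
  left_inv _ := rfl
  right_inv _ := rfl

theorem align_eq_sum :
    alignCount N {v : Fin N → ℕ | (∀ i, v i ≤ 1) ∧ v ≠ 0} ℓ =
      ∑ k ∈ Finset.range (∑ i, ℓ i + 1), Nat.card (Tk N ℓ k) := by
  rw [alignCount, Nat.card_congr (sigEquiv N ℓ), Nat.card_eq_fintype_card,
    Fintype.card_sigma, ← Fin.sum_univ_eq_sum_range]
  exact Finset.sum_congr rfl fun k _ => (Nat.card_eq_fintype_card).symm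

end Stmt16Aux

theorem stmt_16 (N : ℕ) (hN : 1 ≤ N) (ℓ : Fin N → ℕ) :
    (alignCount N {v : Fin N → ℕ | (∀ i, v i ≤ 1) ∧ v ≠ 0} ℓ : ℤ) =
      ∑ k ∈ Finset.Icc (Finset.univ.sup ℓ) (∑ i, ℓ i),
        ∑ j ∈ Finset.range (k + 1),
          (-1 : ℤ) ^ j * k.choose j * ∏ i, ((k - j).choose (ℓ i) : ℤ) := by
  classical
  rw [Stmt16Aux.align_eq_sum N ℓ]
  push_cast
  rw [show (∑ k ∈ Finset.range (∑ i, ℓ i + 1), (Nat.card (Stmt16Aux.Tk N ℓ k) : ℤ)) =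
      ∑ k ∈ Finset.Icc (Finset.univ.sup ℓ) (∑ i, ℓ i), (Nat.card (Stmt16Aux.Tk N ℓ k) : ℤ) from
    (Finset.sum_subset (fun k hk => by
        rw [Finset.mem_Icc] at hk
        rw [Finset.mem_range]
        omega)
      (fun k hk hk' => by
        rw [Finset.mem_range] at hk
        rw [Finset.mem_Icc] at hk'
        have : ¬ Finset.univ.sup ℓ ≤ k := by omega
        have := Stmt16Aux.tk_isEmpty_of_lt N ℓ this
        simp [Nat.card_of_isEmpty])).symm]
  exact Finset.sum_congr rfl fun k _ => Stmt16Aux.key N ℓ k
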